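/- (Lemma: the dual group W_{X̃}, part 2.) Under the Setup with the dual-side data, the map X̃ → W_{X̃}, x̃ ↦ ψ_{x̃}, is injective; consequently the cardinality of X̃ equals the cardinality of W_{X̃}, and moreover both equal the index [Y : Y'] of the subgroup Y' in Y. -/

import Mathlib

open scoped Pointwise

/-- Character sum vanishing: if a multiplicative `ℂ`-valued function on a finite
group is not identically `1`, its sum vanishes. -/
private lemma aux_char_sum_zero {G : Type*} [Group G] [Fintype G] (f : G → ℂ)
    (hmul : ∀ a b : G, f (a * b) = f a * f b) (g₀ : G) (h₀ : f g₀ ≠ 1) :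
    ∑ g : G, f g = 0 := by
  have h1 : ∑ g : G, f (g₀ * g) = ∑ g : G, f g :=
    Fintype.sum_bijective (fun g => g₀ * g) (Group.mulLeft_bijective g₀)
      (fun g => f (g₀ * g)) f (fun g => rfl)
  have h2 : ∑ g : G, f (g₀ * g) = f g₀ * ∑ g : G, f g := by
    rw [Finset.mul_sum]
    exact Finset.sum_congr rfl (fun g _ => hmul g₀ g)
  have h3 : (f g₀ - 1) * ∑ g : G, f g = 0 := by
    rw [sub_mul, one_mul, ← h2, h1, sub_self]
  exact (mul_eq_zero.mp h3).resolve_left (sub_ne_zero_of_ne h₀)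

/-- **the dual group `W_{X̃}`, part 2.** Under the Setup with the dual-side
data, the map `X̃ → W_{X̃}`, `x̃ ↦ ψ_{x̃}`, is injective; consequently `|X̃| = |W_{X̃}|`,
and moreover both equal the index `[Y : Y']`. -/
theorem dual_group_part_two
    {V : Type*} [Group V] [Fintype V]
    (H Y Z : Subgroup V) (X : Set V)
    (hXrep : ∀ v : V, ∃! p : ↥H × ↥X, (p.1 : V) * (p.2 : V) = v)
    (hZcent : Z ≤ Subgroup.center V)
    (hYH : Y ≤ H)
    (hYcent : ∀ y ∈ Y, ∀ h ∈ H, y * h = h * y)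
    (hZY : Z ⊓ Y = ⊥)
    (lam : Z →* ℂˣ)
    (hXYZ : ∀ x ∈ X, ∀ y ∈ Y, x⁻¹ * y⁻¹ * x * y ∈ Z)
    -- `H'` is the subgroup `H·X'` of `V` (the inertia group of `λ̂`)
    (H' : Subgroup V)
    (hH' : (H' : Set V) = {v : V | ∃ h ∈ H, ∃ x ∈ X,
      (∀ (y : V) (hy : y ∈ Y) (hc : x⁻¹ * y⁻¹ * x * y ∈ Z),
        lam ⟨x⁻¹ * y⁻¹ * x * y, hc⟩ = 1) ∧ v = h * x})
    -- `X̃` is a transversal of the right cosets of `H'` in `V`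
    (Xt : Set V)
    (hXtrep : ∀ v : V, ∃! p : ↥H' × ↥Xt, (p.1 : V) * (p.2 : V) = v)
    -- `[Y, V] ⊆ Z`, so that `ψ_{x̃}` is well defined
    (hYV : ∀ (y : V), y ∈ Y → ∀ g : V, y⁻¹ * g⁻¹ * y * g ∈ Z)
    -- `ψ x̃ : Y → ℂˣ` is the map `y ↦ λ([y, x̃])`
    (ψ : V → (↥Y → ℂˣ))
    (hψ : ∀ (xt : V) (y : ↥Y),
      ψ xt y = lam ⟨(y : V)⁻¹ * xt⁻¹ * (y : V) * xt, hYV (y : V) y.2 xt⟩)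
    -- `Y'` is the subgroup `{y ∈ Y : λ([x,y]) = 1 for all x ∈ X}` of `Y`
    (Y' : Subgroup V) (hY'le : Y' ≤ Y)
    (hY' : (Y' : Set V) = {y : V | y ∈ Y ∧ ∀ x ∈ X,
      ∀ (hc : x⁻¹ * y⁻¹ * x * y ∈ Z), lam ⟨x⁻¹ * y⁻¹ * x * y, hc⟩ = 1}) :
    Set.InjOn ψ Xt ∧
    Xt.ncard = {f : ↥Y → ℂˣ | ∃ xt ∈ Xt, f = ψ xt}.ncard ∧
    Xt.ncard = Y'.relIndex Y := by
  classical
  -- the basic pairing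
  set B : ↥Y → V → ℂˣ :=
    fun y g => lam ⟨(y : V)⁻¹ * g⁻¹ * (y : V) * g, hYV (y : V) y.2 g⟩ with hB
  have hψB : ∀ (xt : V) (y : ↥Y), ψ xt y = B y xt := by
    intro xt y
    simp only [hB]
    exact hψ xt y
  -- B is multiplicative in the second variable
  have Bmul_g : ∀ (y : ↥Y) (g₁ g₂ : V), B y (g₁ * g₂) = B y g₁ * B y g₂ := by
    intro y g₁ g₂
    have h1 : (y : V)⁻¹ * g₁⁻¹ * (y : V) * g₁ ∈ Z := hYV _ y.2 g₁
    have h2 : (y : V)⁻¹ * g₂⁻¹ * (y : V) * g₂ ∈ Z := hYV _ y.2 g₂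
    have hcen : ∀ t : V, t * ((y : V)⁻¹ * g₁⁻¹ * (y : V) * g₁)
        = ((y : V)⁻¹ * g₁⁻¹ * (y : V) * g₁) * t :=
      fun t => Subgroup.mem_center_iff.mp (hZcent h1) t
    have key : (y : V)⁻¹ * (g₁ * g₂)⁻¹ * (y : V) * (g₁ * g₂)
        = ((y : V)⁻¹ * g₁⁻¹ * (y : V) * g₁) * ((y : V)⁻¹ * g₂⁻¹ * (y : V) * g₂) := by
      calc (y : V)⁻¹ * (g₁ * g₂)⁻¹ * (y : V) * (g₁ * g₂)
          = ((y : V)⁻¹ * g₂⁻¹ * (y : V)) * (((y : V)⁻¹ * g₁⁻¹ * (y : V) * g₁) * g₂) := by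
            group
        _ = ((y : V)⁻¹ * g₂⁻¹ * (y : V)) * (g₂ * ((y : V)⁻¹ * g₁⁻¹ * (y : V) * g₁)) := by
            rw [← hcen g₂]
        _ = ((y : V)⁻¹ * g₂⁻¹ * (y : V) * g₂) * ((y : V)⁻¹ * g₁⁻¹ * (y : V) * g₁) := by
            group
        _ = ((y : V)⁻¹ * g₁⁻¹ * (y : V) * g₁) * ((y : V)⁻¹ * g₂⁻¹ * (y : V) * g₂) :=
            hcen _
    have hmul : (⟨(y : V)⁻¹ * (g₁ * g₂)⁻¹ * (y : V) * (g₁ * g₂), hYV _ y.2 (g₁ * g₂)⟩ : Z)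
        = (⟨_, h1⟩ : Z) * (⟨_, h2⟩ : Z) := by
      exact Subtype.ext (by push_cast; exact key)
    simp only [hB]
    rw [hmul, map_mul]
  -- B is multiplicative in the first variable
  have Bmul_y : ∀ (y₁ y₂ : ↥Y) (g : V), B (y₁ * y₂) g = B y₁ g * B y₂ g := by
    intro y₁ y₂ g
    have h1 : (y₁ : V)⁻¹ * g⁻¹ * (y₁ : V) * g ∈ Z := hYV _ y₁.2 g
    have h2 : (y₂ : V)⁻¹ * g⁻¹ * (y₂ : V) * g ∈ Z := hYV _ y₂.2 g
    have hcen : ∀ t : V, t * ((y₁ : V)⁻¹ * g⁻¹ * (y₁ : V) * g)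
        = ((y₁ : V)⁻¹ * g⁻¹ * (y₁ : V) * g) * t :=
      fun t => Subgroup.mem_center_iff.mp (hZcent h1) t
    have key : ((y₁ : V) * (y₂ : V))⁻¹ * g⁻¹ * ((y₁ : V) * (y₂ : V)) * g
        = ((y₁ : V)⁻¹ * g⁻¹ * (y₁ : V) * g) * ((y₂ : V)⁻¹ * g⁻¹ * (y₂ : V) * g) := by
      calc ((y₁ : V) * (y₂ : V))⁻¹ * g⁻¹ * ((y₁ : V) * (y₂ : V)) * g
          = ((y₂ : V)⁻¹ * ((y₁ : V)⁻¹ * g⁻¹ * (y₁ : V) * g)) * (g⁻¹ * (y₂ : V) * g) := by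
            group
        _ = (((y₁ : V)⁻¹ * g⁻¹ * (y₁ : V) * g) * (y₂ : V)⁻¹) * (g⁻¹ * (y₂ : V) * g) := by
            rw [hcen ((y₂ : V)⁻¹)]
        _ = ((y₁ : V)⁻¹ * g⁻¹ * (y₁ : V) * g) * ((y₂ : V)⁻¹ * g⁻¹ * (y₂ : V) * g) := by
            group
    have hmul : (⟨((y₁ * y₂ : ↥Y) : V)⁻¹ * g⁻¹ * ((y₁ * y₂ : ↥Y) : V) * g,
        hYV _ (y₁ * y₂).2 g⟩ : Z) = (⟨_, h1⟩ : Z) * (⟨_, h2⟩ : Z) := by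
      refine Subtype.ext ?_
      push_cast
      exact key
    simp only [hB]
    rw [hmul, map_mul]
  -- B y g = 1 whenever y and g commute
  have Bcomm : ∀ (y : ↥Y) (g : V), (y : V) * g = g * (y : V) → B y g = 1 := by
    intro y g hcomm
    have h0 : (⟨(y : V)⁻¹ * g⁻¹ * (y : V) * g, hYV _ y.2 g⟩ : Z) = 1 := by
      refine Subtype.ext ?_
      push_cast
      calc (y : V)⁻¹ * g⁻¹ * (y : V) * g = (y : V)⁻¹ * g⁻¹ * ((y : V) * g) := by group
        _ = (y : V)⁻¹ * g⁻¹ * (g * (y : V)) := by rw [hcomm]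
        _ = 1 := by group
    simp only [hB]
    rw [h0, map_one]
  have Bh_one : ∀ (y : ↥Y) (h : V), h ∈ H → B y h = 1 :=
    fun y h hh => Bcomm y h (hYcent (y : V) y.2 h hh)
  have Binv : ∀ (y : ↥Y) (g : V), B y g⁻¹ = (B y g)⁻¹ := by
    intro y g
    have h0 : B y 1 = 1 := Bcomm y 1 (by group)
    have h1 := Bmul_g y g g⁻¹
    rw [mul_inv_cancel, h0] at h1
    exact (eq_inv_of_mul_eq_one_right h1.symm)
  -- relation with λ([x,y])
  have Brel : ∀ (y : ↥Y) (x : V) (hc : x⁻¹ * (y : V)⁻¹ * x * (y : V) ∈ Z),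
      B y x = (lam ⟨x⁻¹ * (y : V)⁻¹ * x * (y : V), hc⟩)⁻¹ := by
    intro y x hc
    simp only [hB]
    rw [← map_inv]
    congr 1
    refine Subtype.ext ?_
    push_cast
    group
  -- membership criterion for H'
  have memH' : ∀ g : V, g ∈ H' ↔ ∀ y : ↥Y, B y g = 1 := by
    intro g
    constructor
    · intro hg y
      have hg' : g ∈ (H' : Set V) := hg
      rw [hH'] at hg'
      obtain ⟨h, hh, x, hx, hlam, rfl⟩ := hg'
      rw [Bmul_g, Bh_one y h hh, one_mul,
        Brel y x (hXYZ x hx (y : V) y.2), hlam (y : V) y.2 (hXYZ x hx (y : V) y.2), inv_one]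
    · intro hall
      obtain ⟨p, hp, -⟩ := hXrep g
      have : g ∈ (H' : Set V) := by
        rw [hH']
        refine ⟨(p.1 : V), p.1.2, (p.2 : V), p.2.2, ?_, hp.symm⟩
        intro y hy hc
        have h1 : B ⟨y, hy⟩ ((p.2 : ↥X) : V) = 1 := by
          have h2 := hall ⟨y, hy⟩
          rw [← hp, Bmul_g, Bh_one ⟨y, hy⟩ (p.1 : V) p.1.2, one_mul] at h2
          exact h2
        rw [Brel ⟨y, hy⟩ _ hc] at h1
        exact inv_eq_one.mp h1
      exact this
  -- injectivity of ψ on Xt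
  have inj : Set.InjOn ψ Xt := by
    intro a ha b hb hab
    have hmem : a * b⁻¹ ∈ H' := by
      rw [memH']
      intro y
      have h1 : B y a = B y b := by
        rw [← hψB a y, ← hψB b y, hab]
      rw [Bmul_g, Binv, h1, mul_inv_cancel]
    obtain ⟨p, hp, hu⟩ := hXtrep a
    have e1 : ((⟨⟨a * b⁻¹, hmem⟩, ⟨b, hb⟩⟩ : ↥H' × ↥Xt))
        = (⟨1, ⟨a, ha⟩⟩ : ↥H' × ↥Xt) := by
      have q1 := hu ⟨⟨a * b⁻¹, hmem⟩, ⟨b, hb⟩⟩ (by show (a * b⁻¹) * b = a; group)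
      have q2 := hu ⟨1, ⟨a, ha⟩⟩ (by show ((1 : ↥H') : V) * a = a; simp)
      exact q1.trans q2.symm
    have := congrArg (fun q : ↥H' × ↥Xt => ((q.2 : ↥Xt) : V)) e1
    simpa using this.symm
  -- finiteness
  haveI : Fintype ↥Xt := Fintype.ofFinite _
  -- the decomposition bijection for Xt
  have hbij : Function.Bijective (fun p : ↥H' × ↥Xt => (p.1 : V) * (p.2 : V)) := by
    constructor
    · intro p q h
      obtain ⟨r, hr, hu⟩ := hXtrep ((q.1 : V) * (q.2 : V))
      exact (hu p h).trans (hu q rfl).symm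
    · intro v
      obtain ⟨p, hp, -⟩ := hXtrep v
      exact ⟨p, hp⟩
  -- B y · is 1 on all of V when y ∈ Y'
  have Ball : ∀ y : ↥Y, (y : V) ∈ Y' → ∀ g : V, B y g = 1 := by
    intro y hy g
    have hyS : (y : V) ∈ (Y' : Set V) := hy
    rw [hY'] at hyS
    obtain ⟨-, hall⟩ := hyS
    obtain ⟨p, hp, -⟩ := hXrep g
    rw [← hp, Bmul_g, Bh_one y _ p.1.2, one_mul,
      Brel y _ (hXYZ _ p.2.2 _ y.2), hall (p.2 : V) p.2.2 (hXYZ _ p.2.2 _ y.2), inv_one]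
  -- full-group sum factorization
  have hVsum : ∀ y : ↥Y, ∑ v : V, ((B y v : ℂˣ) : ℂ)
      = (Fintype.card ↥H' : ℂ) * ∑ x : ↥Xt, ((B y (x : V) : ℂˣ) : ℂ) := by
    intro y
    have h1 : ∑ p : ↥H' × ↥Xt, ((B y ((p.1 : V) * (p.2 : V)) : ℂˣ) : ℂ)
        = ∑ v : V, ((B y v : ℂˣ) : ℂ) :=
      Fintype.sum_bijective _ hbij _ _ (fun p => rfl)
    rw [← h1]
    rw [Fintype.sum_prod_type]
    have h2 : ∀ p : ↥H' × ↥Xt, ((B y ((p.1 : V) * (p.2 : V)) : ℂˣ) : ℂ)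
        = ((B y (p.2 : V) : ℂˣ) : ℂ) := by
      intro p
      rw [Bmul_g, (memH' (p.1 : V)).mp p.1.2 y, one_mul]
    calc ∑ h : ↥H', ∑ x : ↥Xt, ((B y ((h : V) * (x : V)) : ℂˣ) : ℂ)
        = ∑ h : ↥H', ∑ x : ↥Xt, ((B y (x : V) : ℂˣ) : ℂ) := by
          refine Finset.sum_congr rfl (fun h _ => Finset.sum_congr rfl (fun x _ => ?_))
          exact h2 (h, x)
      _ = (Fintype.card ↥H' : ℂ) * ∑ x : ↥Xt, ((B y (x : V) : ℂˣ) : ℂ) := by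
          rw [Finset.sum_const, Finset.card_univ, nsmul_eq_mul]
  -- column sums
  have hcol : ∀ y : ↥Y, ∑ x : ↥Xt, ((B y (x : V) : ℂˣ) : ℂ)
      = if (y : V) ∈ Y' then (Fintype.card ↥Xt : ℂ) else 0 := by
    intro y
    by_cases hy : (y : V) ∈ Y'
    · rw [if_pos hy]
      have : ∀ x : ↥Xt, ((B y (x : V) : ℂˣ) : ℂ) = 1 := by
        intro x; rw [Ball y hy (x : V), Units.val_one]
      rw [Finset.sum_congr rfl (fun x _ => this x), Finset.sum_const, Finset.card_univ,
        nsmul_eq_mul, mul_one]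
    · rw [if_neg hy]
      -- find a violating x₀ ∈ X
      have hnot : ¬ ((y : V) ∈ {w : V | w ∈ Y ∧ ∀ x ∈ X,
          ∀ (hc : x⁻¹ * w⁻¹ * x * w ∈ Z), lam ⟨x⁻¹ * w⁻¹ * x * w, hc⟩ = 1}) := by
        rw [← hY']; exact hy
      have h3 : ¬ ∀ x ∈ X, ∀ (hc : x⁻¹ * (y : V)⁻¹ * x * (y : V) ∈ Z),
          lam ⟨x⁻¹ * (y : V)⁻¹ * x * (y : V), hc⟩ = 1 := fun hq => hnot ⟨y.2, hq⟩
      push_neg at h3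
      obtain ⟨x₀, hx₀X, hc₀, hne⟩ := h3
      have hBx₀ : B y x₀ ≠ 1 := by
        rw [Brel y x₀ hc₀]
        simpa [inv_eq_one] using hne
      have hzero : ∑ v : V, ((B y v : ℂˣ) : ℂ) = 0 := by
        refine aux_char_sum_zero _ (fun a b => ?_) x₀ ?_
        · rw [Bmul_g, Units.val_mul]
        · simpa [Units.val_eq_one] using hBx₀
      have := hVsum y
      rw [hzero] at this
      have hcardH' : (Fintype.card ↥H' : ℂ) ≠ 0 := by
        exact_mod_cast Fintype.card_ne_zero
      exact (mul_eq_zero.mp this.symm).resolve_left hcardH'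
  -- row sums
  have hrow : ∀ x : ↥Xt, ∑ y : ↥Y, ((B y (x : V) : ℂˣ) : ℂ)
      = if (x : V) ∈ H' then (Fintype.card ↥Y : ℂ) else 0 := by
    intro x
    by_cases hx : (x : V) ∈ H'
    · rw [if_pos hx]
      have : ∀ y : ↥Y, ((B y (x : V) : ℂˣ) : ℂ) = 1 := by
        intro y; rw [(memH' (x : V)).mp hx y, Units.val_one]
      rw [Finset.sum_congr rfl (fun y _ => this y), Finset.sum_const, Finset.card_univ,
        nsmul_eq_mul, mul_one]
    · rw [if_neg hx]
      have h3 : ¬ ∀ y : ↥Y, B y (x : V) = 1 := fun hq => hx ((memH' (x : V)).mpr hq)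
      push_neg at h3
      obtain ⟨y₀, hy₀⟩ := h3
      refine aux_char_sum_zero (fun y : ↥Y => ((B y (x : V) : ℂˣ) : ℂ))
        (fun a b => ?_) y₀ ?_
      · show ((B (a * b) (x : V) : ℂˣ) : ℂ)
            = ((B a (x : V) : ℂˣ) : ℂ) * ((B b (x : V) : ℂˣ) : ℂ)
        rw [Bmul_y, Units.val_mul]
      · simpa [Units.val_eq_one] using hy₀
  -- the distinguished element of Xt lying in H'
  obtain ⟨p₀, hp₀, hu₀⟩ := hXtrep 1
  have hx₀H' : ((p₀.2 : ↥Xt) : V) ∈ H' := by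
    have h1 : ((p₀.2 : ↥Xt) : V) = ((p₀.1 : ↥H') : V)⁻¹ :=
      eq_inv_of_mul_eq_one_right hp₀
    rw [h1]
    exact inv_mem p₀.1.2
  have huniq : ∀ x : ↥Xt, (x : V) ∈ H' → x = p₀.2 := by
    intro x hx
    have hq := hu₀ ⟨⟨(x : V)⁻¹, inv_mem hx⟩, x⟩ (by show (x : V)⁻¹ * (x : V) = 1; group)
    exact congrArg Prod.snd hq
  -- double counting
  have hdouble : ∑ y : ↥Y, ∑ x : ↥Xt, ((B y (x : V) : ℂˣ) : ℂ)
      = ∑ x : ↥Xt, ∑ y : ↥Y, ((B y (x : V) : ℂˣ) : ℂ) := Finset.sum_comm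
  -- count of y's in Y'
  have hY'count : (Finset.univ.filter (fun y : ↥Y => (y : V) ∈ Y')).card
      = Nat.card ↥Y' := by
    have e : ↥Y' ≃ {y : ↥Y // (y : V) ∈ Y'} :=
      { toFun := fun z => ⟨⟨(z : V), hY'le z.2⟩, z.2⟩
        invFun := fun w => ⟨((w.1 : ↥Y) : V), w.2⟩
        left_inv := fun z => rfl
        right_inv := fun w => rfl }
    rw [← Fintype.card_subtype]
    rw [Nat.card_congr e, Nat.card_eq_fintype_card]
  have hLHS : ∑ y : ↥Y, ∑ x : ↥Xt, ((B y (x : V) : ℂˣ) : ℂ)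
      = (Nat.card ↥Y' : ℂ) * (Fintype.card ↥Xt : ℂ) := by
    rw [Finset.sum_congr rfl (fun y _ => hcol y), ← Finset.sum_filter,
      Finset.sum_const, nsmul_eq_mul, hY'count]
  have hRHS : ∑ x : ↥Xt, ∑ y : ↥Y, ((B y (x : V) : ℂˣ) : ℂ)
      = (Fintype.card ↥Y : ℂ) := by
    rw [Finset.sum_congr rfl (fun x _ => hrow x)]
    rw [Finset.sum_eq_single (p₀.2 : ↥Xt)]
    · rw [if_pos hx₀H']
    · intro b _ hb
      exact if_neg (fun hm => hb (huniq b hm))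
    · intro hns
      exact absurd (Finset.mem_univ _) hns
  have hC : (Nat.card ↥Y' : ℂ) * (Fintype.card ↥Xt : ℂ) = (Fintype.card ↥Y : ℂ) := by
    rw [← hLHS, hdouble, hRHS]
  have hN : Nat.card ↥Y' * Fintype.card ↥Xt = Fintype.card ↥Y := by
    exact_mod_cast hC
  -- relate to relindex
  have hrel : Nat.card ↥Y' * Y'.relIndex Y = Nat.card ↥Y := by
    have h1 := Subgroup.card_mul_index (Y'.subgroupOf Y)
    have h2 : Nat.card ↥(Y'.subgroupOf Y) = Nat.card ↥Y' :=
      Nat.card_congr (Subgroup.subgroupOfEquivOfLe hY'le).toEquiv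
    rw [h2] at h1
    exact h1
  have hpos : 0 < Nat.card ↥Y' := Nat.card_pos
  have hfinal : Fintype.card ↥Xt = Y'.relIndex Y := by
    refine Nat.eq_of_mul_eq_mul_left hpos ?_
    rw [hN, ← Nat.card_eq_fintype_card, hrel, Nat.card_eq_fintype_card]
  have hXtcard : Xt.ncard = Fintype.card ↥Xt := by
    rw [← Nat.card_coe_set_eq, Nat.card_eq_fintype_card]
  refine ⟨inj, ?_, ?_⟩
  · have himg : {f : ↥Y → ℂˣ | ∃ xt ∈ Xt, f = ψ xt} = ψ '' Xt := by
      ext f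
      simp only [Set.mem_setOf_eq, Set.mem_image]
      constructor
      · rintro ⟨xt, hxt, rfl⟩; exact ⟨xt, hxt, rfl⟩
      · rintro ⟨xt, hxt, rfl⟩; exact ⟨xt, hxt, rfl⟩
    rw [himg, Set.ncard_image_of_injOn inj]
  · rw [hXtcard, hfinal]
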